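/- Given a non-empty flag F in F_q^d of type {t_1 < t_2 < ... < t_f}, the number of chambers of F_q^d containing F equals z_{t_1} · z_{d - t_f} · ∏_{i=2}^{f} z_{t_i - t_{i-1}}, where z_c denotes the number of chambers of F_q^c. -/

import Mathlib

open Module Finset
open scoped Classical

/-- A chamber of a `c`-dimensional vector space, encoded as an increasing chain
`f : ℕ → Submodule K V` with `finrank (f i) = i` for `i ≤ c` and `f i = ⊤` for `i ≥ c`. -/
def IsChamber (K : Type*) {V : Type*} [Field K] [AddCommGroup V] [Module K V]
    (c : ℕ) (f : ℕ → Submodule K V) : Prop :=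
  Monotone f ∧ (∀ i ≤ c, Module.finrank K (f i) = i) ∧ ∀ i, c ≤ i → f i = ⊤

/-- The type of chambers of `V`, `dim V = c`. -/
abbrev Chamber (K V : Type*) [Field K] [AddCommGroup V] [Module K V] (c : ℕ) :=
  {f : ℕ → Submodule K V // IsChamber K c f}

/-- Two chambers are opposite if `C_i ∩ D_{c-i} = 0` for `1 ≤ i ≤ c - 1`. -/
def OppositeChambers (K : Type*) {V : Type*} [Field K] [AddCommGroup V] [Module K V]
    (c : ℕ) (f g : ℕ → Submodule K V) : Prop :=
  ∀ i, 1 ≤ i → i ≤ c - 1 → f i ⊓ g (c - i) = ⊥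

/-- `z_c(q) = ∏_{i=1}^c (q^i - 1) / (q-1)`, the number of chambers of `𝔽_q^c`. -/
def zNat (q c : ℕ) : ℕ := (∏ i ∈ Finset.Icc 1 c, (q ^ i - 1)) / (q - 1) ^ c

/-- The Gaussian binomial coefficient `[b choose a]_q`. -/
def gaussNat (q b a : ℕ) : ℕ :=
  (∏ i ∈ Finset.Icc 1 a, (q ^ (b - a + i) - 1)) / ∏ i ∈ Finset.Icc 1 a, (q ^ i - 1)


lemma myDvdPow (q i : ℕ) : (q - 1) ∣ (q ^ i - 1) := by
  simpa using Nat.sub_dvd_pow_sub_pow q 1 i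

lemma myPowDvdProd (q c : ℕ) : (q - 1) ^ c ∣ ∏ i ∈ Finset.Icc 1 c, (q ^ i - 1) := by
  induction c with
  | zero => simp
  | succ c ih =>
    rw [Finset.prod_Icc_succ_top (by omega), pow_succ]
    exact mul_dvd_mul ih (myDvdPow q (c+1))

lemma zNat_zero' (q : ℕ) : (∏ i ∈ Finset.Icc 1 0, (q ^ i - 1)) / (q - 1) ^ 0 = 1 := by simp

lemma zNat_succ' (q c : ℕ) :
    (∏ i ∈ Finset.Icc 1 (c+1), (q ^ i - 1)) / (q - 1) ^ (c+1) =
      ((q ^ (c+1) - 1) / (q - 1)) * ((∏ i ∈ Finset.Icc 1 c, (q ^ i - 1)) / (q - 1) ^ c) := by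
  rw [Finset.prod_Icc_succ_top (by omega), mul_comm ((q ^ (c+1) - 1) / (q - 1)),
    Nat.div_mul_div_comm (myPowDvdProd q c) (myDvdPow q (c+1)), pow_succ (q-1)]

section
variable (K V : Type*) [Field K] [Fintype K] [AddCommGroup V] [Module K V]
  [FiniteDimensional K V]

include K in
lemma finiteV : Finite V := Module.finite_of_finite K

lemma finiteChamber (c : ℕ) : Finite (Chamber K V c) := by
  haveI : Finite V := Module.finite_of_finite K
  haveI : Finite (Submodule K V) := by
    exact Finite.of_injective (fun W => (W : Set V)) fun a b h => by
      exact SetLike.coe_injective h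
  apply Finite.of_injective (fun C : Chamber K V c => (fun i : Fin (c+1) => C.1 i))
  rintro ⟨f, hf⟩ ⟨g, hg⟩ h
  ext i : 2
  show f i = g i
  rcases le_or_gt i c with hi | hi
  · exact congrFun h ⟨i, by omega⟩
  · rw [hf.2.2 i (by omega), hg.2.2 i (by omega)]

/-- For `finrank V ≤ 1`, a chamber is unique. -/
lemma chamber_subsingleton (c : ℕ) (hc : c ≤ 1) : Subsingleton (Chamber K V c) := by
  constructor
  rintro ⟨f, hf⟩ ⟨g, hg⟩
  ext i : 2
  show f i = g i
  rcases Nat.eq_zero_or_pos i with rfl | hi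
  · have h1 := hf.2.1 0 (Nat.zero_le _)
    have h2 := hg.2.1 0 (Nat.zero_le _)
    rw [Submodule.finrank_eq_zero.mp h1, Submodule.finrank_eq_zero.mp h2]
  · rw [hf.2.2 i (by omega), hg.2.2 i (by omega)]

lemma chamber_nonempty_of_le_one (c : ℕ) (hV : Module.finrank K V = c) (hc : c ≤ 1) :
    Nonempty (Chamber K V c) := by
  refine ⟨⟨fun i => if i = 0 then ⊥ else ⊤, ?_, ?_, ?_⟩⟩
  · intro a b hab
    by_cases ha : a = 0 <;> by_cases hb : b = 0 <;> simp_all <;> omega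
  · intro i hi
    interval_cases c
    · interval_cases i; simp
    · interval_cases i
      · simp
      · simpa using hV
  · intro i hi
    by_cases h0 : i = 0
    · subst h0
      have : Module.finrank K V = 0 := by omega
      haveI : Subsingleton V := Module.finrank_zero_iff.mp this
      simp [Subsingleton.elim (⊥ : Submodule K V) ⊤]
    · simp [h0]
end

section
variable (K V : Type*) [Field K] [Fintype K] [AddCommGroup V] [Module K V]
  [FiniteDimensional K V]

lemma card_nonzero : Nat.card {v : V // v ≠ 0} =
    Fintype.card K ^ Module.finrank K V - 1 := by
  haveI : Finite V := Module.finite_of_finite K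
  haveI : Fintype V := Fintype.ofFinite V
  have h1 : Fintype.card {v : V // ¬ v = 0} =
      Fintype.card V - Fintype.card {v : V // v = 0} := Fintype.card_subtype_compl _
  simp only [Fintype.card_subtype_eq] at h1
  calc Nat.card {v : V // v ≠ 0} = Fintype.card {v : V // ¬ v = 0} :=
        Nat.card_eq_fintype_card
  _ = Fintype.card V - 1 := h1
  _ = Fintype.card K ^ Module.finrank K V - 1 := by rw [card_eq_pow_finrank (K := K)]

noncomputable def fiberEquiv (W : {W : Submodule K V // Module.finrank K W = 1}) :
    {a : {v : V // v ≠ 0} // Submodule.span K {a.1} = W.1} ≃ {w : W.1 // w ≠ 0} where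
  toFun a := ⟨⟨a.1.1, (Submodule.span_singleton_le_iff_mem _ _).mp (le_of_eq a.2)⟩,
    fun h => a.1.2 (by simpa using congrArg Subtype.val h)⟩
  invFun w := ⟨⟨w.1.1, fun h => w.2 (ZeroMemClass.coe_eq_zero.mp h)⟩, by
    apply Submodule.eq_of_le_of_finrank_eq
    · rw [Submodule.span_le, Set.singleton_subset_iff]; exact w.1.2
    · rw [W.2, finrank_span_singleton]
      exact fun h => w.2 (ZeroMemClass.coe_eq_zero.mp h)⟩
  left_inv a := by ext; rfl
  right_inv w := by ext; rfl

lemma card_lines (c : ℕ) (hV : Module.finrank K V = c) :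
    Nat.card {W : Submodule K V // Module.finrank K W = 1} * (Fintype.card K - 1) =
      Fintype.card K ^ c - 1 := by
  haveI : Finite V := Module.finite_of_finite K
  haveI : Fintype V := Fintype.ofFinite V
  have e : (Σ W : {W : Submodule K V // Module.finrank K W = 1},
      {a : {v : V // v ≠ 0} // Submodule.span K {a.1} = W.1}) ≃ {v : V // v ≠ 0} := by
    refine Equiv.trans ?_ (Equiv.sigmaFiberEquiv
      (fun a : {v : V // v ≠ 0} => (⟨Submodule.span K {a.1}, finrank_span_singleton a.2⟩ :
        {W : Submodule K V // Module.finrank K W = 1})))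
    refine Equiv.sigmaCongrRight fun W => Equiv.subtypeEquivRight fun a => ?_
    rw [Subtype.ext_iff]
  have hcard := Fintype.card_congr e
  rw [Fintype.card_sigma] at hcard
  simp only [← Nat.card_eq_fintype_card] at hcard
  rw [card_nonzero K V, hV] at hcard
  have hfib : ∀ W : {W : Submodule K V // Module.finrank K W = 1},
      Nat.card {a : {v : V // v ≠ 0} // Submodule.span K {a.1} = W.1} =
        Fintype.card K - 1 := by
    intro W
    rw [Nat.card_congr (fiberEquiv K V W)]
    have h2 := card_nonzero K W.1
    rwa [W.2, pow_one] at h2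
  rw [Finset.sum_congr rfl (fun W _ => hfib W), Finset.sum_const, Finset.card_univ,
    smul_eq_mul] at hcard
  simpa [Nat.card_eq_fintype_card] using hcard
end

section
variable {K V : Type*} [Field K] [AddCommGroup V] [Module K V]
  [FiniteDimensional K V]

lemma finrank_map_mkQ (g W : Submodule K V) (hgW : g ≤ W) :
    finrank K (W.map g.mkQ) + finrank K g = finrank K W := by
  have h := LinearMap.finrank_range_add_finrank_ker (g.mkQ.comp W.subtype)
  rw [LinearMap.range_comp, Submodule.range_subtype, LinearMap.ker_comp,
    Submodule.ker_mkQ, (Submodule.comapSubtypeEquivOfLe hgW).finrank_eq] at h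
  exact h

lemma finrank_comap_mkQ (g : Submodule K V) (B : Submodule K (V ⧸ g)) :
    finrank K (B.comap g.mkQ) = finrank K B + finrank K g := by
  have hle : g ≤ B.comap g.mkQ := by
    have h0 := Submodule.comap_mono (f := g.mkQ) (bot_le (a := B))
    rwa [Submodule.comap_bot, Submodule.ker_mkQ] at h0
  have h := finrank_map_mkQ g (B.comap g.mkQ) hle
  rw [Submodule.map_comap_eq_of_surjective (Submodule.mkQ_surjective g)] at h
  omega
variable (K)

noncomputable def splitEquiv (d t : ℕ) (hV : finrank K V = d) (g : Submodule K V)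
    (hg : finrank K g = t) :
    {C : Chamber K V d // C.1 t = g} ≃ Chamber K g t × Chamber K (V ⧸ g) (d - t) where
  toFun C :=
    ⟨⟨fun i => (C.1.1 i).comap g.subtype, by
      obtain ⟨⟨f, hmono, hrk, htop⟩, hfix⟩ := C
      have htd : t ≤ d := by rw [← hV, ← hg]; exact Submodule.finrank_le g
      refine ⟨fun a b hab => Submodule.comap_mono (hmono hab), ?_, ?_⟩
      · intro i hi
        have hle : f i ≤ g := hfix ▸ hmono hi
        rw [(Submodule.comapSubtypeEquivOfLe hle).finrank_eq]
        exact hrk i (hi.trans htd)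
      · intro i hi
        rw [Submodule.comap_subtype_eq_top]
        exact hfix ▸ hmono hi⟩,
    ⟨fun i => (C.1.1 (t + i)).map g.mkQ, by
      obtain ⟨⟨f, hmono, hrk, htop⟩, hfix⟩ := C
      have htd : t ≤ d := by rw [← hV, ← hg]; exact Submodule.finrank_le g
      refine ⟨fun a b hab => Submodule.map_mono (hmono (by omega)), ?_, ?_⟩
      · intro i hi
        dsimp only
        have hle : g ≤ f (t + i) := hfix ▸ hmono (Nat.le_add_right t i)
        have := finrank_map_mkQ g (f (t + i)) hle
        rw [hg, hrk (t + i) (by omega)] at this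
        omega
      · intro i hi
        dsimp only
        rw [htop (t + i) (by omega), Submodule.map_top, Submodule.range_mkQ]⟩⟩
  invFun AB :=
    ⟨⟨fun i => if i ≤ t then (AB.1.1 i).map g.subtype else (AB.2.1 (i - t)).comap g.mkQ, by
      obtain ⟨⟨A, hAmono, hArk, hAtop⟩, ⟨B, hBmono, hBrk, hBtop⟩⟩ := AB
      have htd : t ≤ d := by rw [← hV, ← hg]; exact Submodule.finrank_le g
      have hg' : ∀ j, g ≤ (B j).comap g.mkQ := by
        intro j
        have h0 := Submodule.comap_mono (f := g.mkQ) (bot_le (a := B j))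
        rwa [Submodule.comap_bot, Submodule.ker_mkQ] at h0
      refine ⟨?_, ?_, ?_⟩
      · intro a b hab
        dsimp only
        by_cases ha : a ≤ t <;> by_cases hb : b ≤ t
        · rw [if_pos ha, if_pos hb]; exact Submodule.map_mono (hAmono hab)
        · rw [if_pos ha, if_neg hb]
          exact le_trans (Submodule.map_subtype_le g (A a)) (hg' (b - t))
        · omega
        · rw [if_neg ha, if_neg hb]
          exact Submodule.comap_mono (hBmono (by omega))
      · intro i hi
        dsimp only
        show finrank K ↥(if i ≤ t then (A i).map g.subtype else (B (i - t)).comap g.mkQ) = i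
        by_cases h : i ≤ t
        · rw [if_pos h, Submodule.finrank_map_subtype_eq]
          exact hArk i h
        · rw [if_neg h, finrank_comap_mkQ, hg, hBrk (i - t) (by omega)]
          omega
      · intro i hi
        dsimp only
        by_cases h : i ≤ t
        · have hit : i = t := by omega
          have htd2 : t = d := by omega
          rw [if_pos h, hit, hAtop t le_rfl, Submodule.map_top, Submodule.range_subtype]
          apply Submodule.eq_top_of_finrank_eq
          rw [hg, hV, htd2]
        · rw [if_neg h, hBtop (i - t) (by omega), Submodule.comap_top]⟩, by
      show (if t ≤ t then _ else _) = g
      rw [if_pos le_rfl, AB.1.2.2.2 t le_rfl, Submodule.map_top, Submodule.range_subtype]⟩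
  left_inv := by
    rintro ⟨⟨f, hmono, hrk, htop⟩, hfix⟩
    apply Subtype.ext
    apply Subtype.ext
    funext i
    show (if i ≤ t then ((f i).comap g.subtype).map g.subtype
      else ((f (t + (i - t))).map g.mkQ).comap g.mkQ) = f i
    by_cases h : i ≤ t
    · rw [if_pos h, Submodule.map_comap_subtype, inf_eq_right]
      exact hfix ▸ hmono h
    · rw [if_neg h, show t + (i - t) = i by omega, Submodule.comap_map_eq,
        Submodule.ker_mkQ, sup_eq_left]
      exact hfix ▸ hmono (by omega)
  right_inv := by
    rintro ⟨⟨A, hAmono, hArk, hAtop⟩, ⟨B, hBmono, hBrk, hBtop⟩⟩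
    refine Prod.ext (Subtype.ext (funext fun i => ?_)) (Subtype.ext (funext fun i => ?_))
    · show ((if i ≤ t then (A i).map g.subtype else (B (i - t)).comap g.mkQ).comap
        g.subtype) = A i
      by_cases h : i ≤ t
      · rw [if_pos h, Submodule.comap_map_eq, Submodule.ker_subtype, sup_bot_eq]
      · rw [if_neg h, Submodule.comap_subtype_eq_top.mpr, hAtop i (by omega)]
        have h0 := Submodule.comap_mono (f := g.mkQ) (bot_le (a := B (i - t)))
        rwa [Submodule.comap_bot, Submodule.ker_mkQ] at h0
    · show ((if t + i ≤ t then (A (t + i)).map g.subtype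
        else (B (t + i - t)).comap g.mkQ).map g.mkQ) = B i
      by_cases h : i = 0
      · subst h
        simp only [Nat.add_zero]
        rw [if_pos le_rfl, hAtop t le_rfl, Submodule.map_top, Submodule.range_subtype]
        have hb : Submodule.map g.mkQ g = ⊥ := by
          rw [eq_bot_iff, Submodule.map_le_iff_le_comap, Submodule.comap_bot,
            Submodule.ker_mkQ]
        rw [hb]
        exact (Submodule.finrank_eq_zero.mp (hBrk 0 (Nat.zero_le _))).symm
      · rw [if_neg (by omega), show t + i - t = i by omega,
          Submodule.map_comap_eq_of_surjective (Submodule.mkQ_surjective g)]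

end

section
variable (K : Type*) [Field K] [Fintype K]

lemma card_chamber : ∀ (c : ℕ) (V : Type u) [AddCommGroup V] [Module K V]
    [FiniteDimensional K V], Module.finrank K V = c →
    Nat.card (Chamber K V c) = zNat (Fintype.card K) c := by
  intro c
  induction c with
  | zero =>
    intro V _ _ _ hV
    haveI := chamber_subsingleton K V 0 (by omega)
    haveI := chamber_nonempty_of_le_one K V 0 hV (by omega)
    rw [show zNat (Fintype.card K) 0 = 1 from zNat_zero' _, Nat.card_eq_one_iff_unique]
    exact ⟨inferInstance, inferInstance⟩
  | succ c ih =>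
    intro V _ _ _ hV
    haveI : Finite V := Module.finite_of_finite K
    haveI : Finite (Submodule K V) :=
      Finite.of_injective (fun W => (W : Set V)) fun a b h => SetLike.coe_injective h
    haveI := finiteChamber K V (c + 1)
    set L := {W : Submodule K V // Module.finrank K W = 1} with hLdef
    haveI : Fintype L := Fintype.ofFinite _
    have e : Chamber K V (c + 1) ≃
        Σ W : L, {C : Chamber K V (c + 1) // C.1 1 = W.1} := by
      refine (Equiv.sigmaFiberEquiv (fun C : Chamber K V (c + 1) =>
        (⟨C.1 1, C.2.2.1 1 (by omega)⟩ : L))).symm.trans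
        (Equiv.sigmaCongrRight fun W => Equiv.subtypeEquivRight fun C => ?_)
      exact Subtype.ext_iff
    have hfib : ∀ W : L, Nat.card {C : Chamber K V (c + 1) // C.1 1 = W.1} =
        zNat (Fintype.card K) c := by
      intro W
      rw [Nat.card_congr (splitEquiv K (c + 1) 1 hV W.1 W.2), Nat.card_prod]
      have h1 : Nat.card (Chamber K W.1 1) = 1 := by
        haveI := chamber_subsingleton K W.1 1 le_rfl
        haveI := chamber_nonempty_of_le_one K W.1 1 W.2 le_rfl
        rw [Nat.card_eq_one_iff_unique]
        exact ⟨inferInstance, inferInstance⟩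
      have h2 : Module.finrank K (V ⧸ W.1) = c := by
        have := Submodule.finrank_quotient_add_finrank W.1
        rw [hV, W.2] at this
        omega
      rw [h1, show c + 1 - 1 = c by omega, ih (V ⧸ W.1) h2, one_mul]
    have hcard := Nat.card_congr e
    haveI : ∀ W : L, Fintype {C : Chamber K V (c + 1) // C.1 1 = W.1} :=
      fun W => Fintype.ofFinite _
    rw [Nat.card_eq_fintype_card
      (α := Σ W : L, {C : Chamber K V (c + 1) // C.1 1 = W.1}),
      Fintype.card_sigma] at hcard
    simp only [← Nat.card_eq_fintype_card] at hcard
    rw [Finset.sum_congr rfl (fun W _ => hfib W), Finset.sum_const, Finset.card_univ,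
      smul_eq_mul] at hcard
    have hlines : Fintype.card L * (Fintype.card K - 1) = Fintype.card K ^ (c + 1) - 1 := by
      rw [← Nat.card_eq_fintype_card]
      exact card_lines K V (c + 1) hV
    have hq : 2 ≤ Fintype.card K := Fintype.one_lt_card
    have hL : Fintype.card L = (Fintype.card K ^ (c + 1) - 1) / (Fintype.card K - 1) := by
      rw [← hlines, Nat.mul_div_cancel _ (by omega)]
    rw [hcard, hL, show (zNat (Fintype.card K) (c + 1) : ℕ) =
      ((Fintype.card K ^ (c + 1) - 1) / (Fintype.card K - 1)) * zNat (Fintype.card K) c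
      from zNat_succ' (Fintype.card K) c]
end


section
variable (K : Type*) [Field K] [Fintype K]

lemma aux_count : ∀ (m : ℕ) (V : Type u) [AddCommGroup V] [Module K V]
    [FiniteDimensional K V] (d : ℕ), Module.finrank K V = d →
    ∀ (t : Fin (m + 1) → ℕ), StrictMono t → t (Fin.last m) ≤ d →
    ∀ (g : Fin (m + 1) → Submodule K V), Monotone g →
    (∀ j, Module.finrank K (g j) = t j) →
    Nat.card {C : Chamber K V d // ∀ j, C.1 (t j) = g j} =
      zNat (Fintype.card K) (t 0) * zNat (Fintype.card K) (d - t (Fin.last m)) *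
        ∏ j : Fin m, zNat (Fintype.card K) (t j.succ - t j.castSucc) := by
  intro m
  induction m with
  | zero =>
    intro V _ _ _ d hV t ht htd g hgmono hg
    have e : {C : Chamber K V d // ∀ j, C.1 (t j) = g j} ≃
        Chamber K (g 0) (t 0) × Chamber K (V ⧸ g 0) (d - t 0) :=
      (Equiv.subtypeEquivRight fun C => by
        constructor
        · intro h; exact h 0
        · intro h j; rw [Fin.eq_zero j]; exact h).trans
        (splitEquiv K d (t 0) hV (g 0) (hg 0))
    rw [Nat.card_congr e, Nat.card_prod]
    have h1 : Nat.card (Chamber K ↥(g 0) (t 0)) = zNat (Fintype.card K) (t 0) :=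
      card_chamber K (t 0) (g 0) (hg 0)
    have hq : Module.finrank K (V ⧸ g 0) = d - t 0 := by
      have h := Submodule.finrank_quotient_add_finrank (g 0)
      rw [hV, hg 0] at h
      omega
    have h2 : Nat.card (Chamber K (V ⧸ g 0) (d - t 0)) =
        zNat (Fintype.card K) (d - t 0) := card_chamber K (d - t 0) (V ⧸ g 0) hq
    rw [h1, h2]
    show _ = _ * zNat (Fintype.card K) (d - t (Fin.last 0)) * ∏ j : Fin 0, _
    rw [Finset.univ_eq_empty, Finset.prod_empty, mul_one]
    rfl
  | succ m ih =>
    intro V _ _ _ d hV t ht htd g hgmono hg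
    set T := t (Fin.last (m + 1)) with hT
    set G := g (Fin.last (m + 1)) with hG
    have hGrk : Module.finrank K G = T := hg _
    have hle : ∀ j : Fin (m + 1), g j.castSucc ≤ G :=
      fun j => hgmono (Fin.le_last _)
    have htle : ∀ j : Fin (m + 1), t j.castSucc ≤ T :=
      fun j => ht.monotone (Fin.le_last _)
    have e1 : {C : Chamber K V d // ∀ j, C.1 (t j) = g j} ≃
        {x : {C : Chamber K V d // C.1 T = G} //
          ∀ j : Fin (m + 1), x.1.1 (t j.castSucc) = g j.castSucc} :=
      ⟨fun C => ⟨⟨C.1, C.2 (Fin.last (m + 1))⟩, fun j => C.2 j.castSucc⟩,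
       fun x => ⟨x.1.1, fun j => Fin.lastCases x.1.2 (fun j' => x.2 j') j⟩,
       fun C => rfl, fun x => rfl⟩
    have e2 : {x : {C : Chamber K V d // C.1 T = G} //
          ∀ j : Fin (m + 1), x.1.1 (t j.castSucc) = g j.castSucc} ≃
        {y : Chamber K G T × Chamber K (V ⧸ G) (d - T) //
          ∀ j : Fin (m + 1), y.1.1 (t j.castSucc) =
            (g j.castSucc).comap G.subtype} := by
      refine Equiv.subtypeEquiv (splitEquiv K d T hV G hGrk) fun x => ?_
      have hE : ∀ i, ((splitEquiv K d T hV G hGrk) x).1.1 i =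
          (x.1.1 i).comap G.subtype := fun i => rfl
      constructor
      · intro h j; rw [hE, h j]
      · intro h j
        have hx : x.1.1 (t j.castSucc) ≤ G :=
          le_of_le_of_eq (x.1.2.1 (htle j)) x.2
        have hgj := h j
        rw [hE] at hgj
        have h2 := congrArg (Submodule.map G.subtype) hgj
        rwa [Submodule.map_comap_subtype, Submodule.map_comap_subtype,
          inf_eq_right.mpr hx, inf_eq_right.mpr (hle j)] at h2
    have e3 : {y : Chamber K G T × Chamber K (V ⧸ G) (d - T) //
          ∀ j : Fin (m + 1), y.1.1 (t j.castSucc) =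
            (g j.castSucc).comap G.subtype} ≃
        {A : Chamber K G T // ∀ j : Fin (m + 1), A.1 (t j.castSucc) =
            (g j.castSucc).comap G.subtype} × Chamber K (V ⧸ G) (d - T) :=
      ⟨fun y => ⟨⟨y.1.1, y.2⟩, y.1.2⟩, fun z => ⟨⟨z.1.1, z.2⟩, z.1.2⟩,
       fun y => rfl, fun z => rfl⟩
    rw [Nat.card_congr (e1.trans (e2.trans e3)), Nat.card_prod]
    have hq : Module.finrank K (V ⧸ G) = d - T := by
      have h := Submodule.finrank_quotient_add_finrank G
      rw [hV, hGrk] at h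
      omega
    have h2 : Nat.card (Chamber K (V ⧸ G) (d - T)) = zNat (Fintype.card K) (d - T) :=
      card_chamber K (d - T) (V ⧸ G) hq
    have h1 := ih G T hGrk (fun j => t j.castSucc)
      (fun a b hab => ht (Fin.castSucc_lt_castSucc_iff.mpr hab))
      (htle (Fin.last m))
      (fun j => (g j.castSucc).comap G.subtype)
      (fun a b hab => Submodule.comap_mono (hgmono (Fin.castSucc_le_castSucc_iff.mpr hab)))
      (fun j => by
        rw [(Submodule.comapSubtypeEquivOfLe (hle j)).finrank_eq]
        exact hg j.castSucc)
    rw [h1, h2]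
    have hprod : (∏ j : Fin (m + 1),
        zNat (Fintype.card K) (t j.succ - t j.castSucc)) =
        (∏ j : Fin m, zNat (Fintype.card K)
          (t (j.succ.castSucc) - t (j.castSucc.castSucc))) *
          zNat (Fintype.card K) (T - t ((Fin.last m).castSucc)) := by
      rw [Fin.prod_univ_castSucc]
      congr 1
    rw [hprod]
    simp only [Fin.castSucc_zero]
    ring
end

/-- the number of chambers containing a non-empty flag of type
`t_1 < … < t_f` is `z_{t_1} · z_{d-t_f} · ∏_{i=2}^f z_{t_i - t_{i-1}}`. -/
theorem card_chambers_through_flag (q d m : ℕ) (K V : Type*) [Field K] [Fintype K]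
    [AddCommGroup V] [Module K V] [FiniteDimensional K V]
    (hK : Fintype.card K = q) (hV : Module.finrank K V = d)
    (t : Fin (m + 1) → ℕ) (ht : StrictMono t)
    (ht1 : 1 ≤ t 0) (htd : t (Fin.last m) ≤ d - 1)
    (g : Fin (m + 1) → Submodule K V) (hgmono : Monotone g)
    (hg : ∀ j, Module.finrank K (g j) = t j) :
    Nat.card {C : Chamber K V d // ∀ j, C.1 (t j) = g j} =
      zNat q (t 0) * zNat q (d - t (Fin.last m)) *
        ∏ j : Fin m, zNat q (t j.succ - t j.castSucc) := by
  subst hK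
  exact aux_count K m V d hV t ht (le_trans htd (Nat.sub_le d 1)) g hgmono hg
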